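/- (Piling-up identity underlying the LLR projection rule.) Let ι be a finite index set and p : ι → ℝ. Then ∑_{b : ι → ZMod 2, ∑_{i} b i = 1} ∏_{i} (if b i = 1 then p i else 1 - p i) = (1 - ∏_{i} (1 - 2 · p i)) / 2, where the outer sum ranges over all functions b : ι → ZMod 2 whose coordinate sum in ZMod 2 equals 1 (i.e., with an odd number of ones), and the inner sum and products are over all i ∈ ι. -/
import Mathlib

lemma pu_sum_prod {ι : Type*} [Fintype ι] [DecidableEq ι] (h : ι → ZMod 2 → ℝ) :
    ∑ b : ι → ZMod 2, ∏ i : ι, h i (b i) = ∏ i : ι, (h i 0 + h i 1) := by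
  have : ∀ i : ι, h i 0 + h i 1 = ∑ x : ZMod 2, h i x := by
    intro i
    rw [show (Finset.univ : Finset (ZMod 2)) = {0, 1} by decide]
    simp
  simp_rw [this]
  rw [Finset.prod_univ_sum]
  simp [Fintype.piFinset_univ]

lemma pu_sigma_sum {ι : Type*} (s : Finset ι) (b : ι → ZMod 2) :
    ∏ i ∈ s, (if b i = 1 then (-1 : ℝ) else 1)
      = (if (∑ i ∈ s, b i) = 1 then (-1 : ℝ) else 1) := by
  classical
  induction s using Finset.cons_induction with
  | empty => simp
  | cons a s ha ih =>
      rw [Finset.prod_cons, Finset.sum_cons, ih]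
      have h01 : ∀ x : ZMod 2, x = 0 ∨ x = 1 := by decide
      rcases h01 (b a) with h | h <;> rcases h01 (∑ i ∈ s, b i) with h' | h' <;>
        simp [h, h']

/-- The piling-up identity: the probability that the XOR of independent bits
(the `i`-th equal to `1` with probability `p i`) equals `1` is `(1 - ∏ (1 - 2 p i)) / 2`. -/
theorem piling_up (ι : Type*) [Fintype ι] [DecidableEq ι] (p : ι → ℝ) :
    ∑ b ∈ Finset.univ.filter (fun b : ι → ZMod 2 => (∑ i : ι, b i) = 1),
        ∏ i : ι, (if b i = 1 then p i else 1 - p i)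
      = (1 - ∏ i : ι, (1 - 2 * p i)) / 2 := by
  classical
  set f : (ι → ZMod 2) → ℝ := fun b => ∏ i : ι, (if b i = 1 then p i else 1 - p i) with hf
  set P := Finset.univ.filter (fun b : ι → ZMod 2 => (∑ i : ι, b i) = 1) with hP
  have h1 : ∑ b ∈ P, f b + ∑ b ∈ Pᶜ, f b = 1 := by
    rw [Finset.sum_add_sum_compl]
    have := pu_sum_prod (fun i x => if x = 1 then p i else 1 - p i)
    simp only [hf]
    rw [this]
    simp
  have h2 : (-1) * ∑ b ∈ P, f b + ∑ b ∈ Pᶜ, f b = ∏ i : ι, (1 - 2 * p i) := by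
    have key : ∀ b : ι → ZMod 2,
        (if (∑ i : ι, b i) = 1 then (-1 : ℝ) else 1) * f b
          = ∏ i : ι, (if b i = 1 then -p i else 1 - p i) := by
      intro b
      rw [hf, ← pu_sigma_sum Finset.univ b, ← Finset.prod_mul_distrib]
      refine Finset.prod_congr rfl fun i _ => ?_
      by_cases h : b i = 1 <;> simp [h]
    have hT : ∑ b : ι → ZMod 2, ∏ i : ι, (if b i = 1 then -p i else 1 - p i)
        = ∏ i : ι, (1 - 2 * p i) := by
      rw [pu_sum_prod (fun i x => if x = 1 then -p i else 1 - p i)]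
      refine Finset.prod_congr rfl fun i _ => ?_
      norm_num
      ring
    rw [← hT, Finset.mul_sum]
    rw [← Finset.sum_add_sum_compl P (fun b => ∏ i : ι, (if b i = 1 then -p i else 1 - p i))]
    congr 1
    · refine Finset.sum_congr rfl fun b hb => ?_
      rw [← key b]
      rw [hP, Finset.mem_filter] at hb
      simp [hb.2]
    · refine Finset.sum_congr rfl fun b hb => ?_
      rw [← key b]
      rw [hP, Finset.mem_compl, Finset.mem_filter] at hb
      simp at hb
      simp [hb]
  linarith
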